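/- Let p be an odd prime, m ≥ 2, and α ∈ F_p with α ≠ 0. For every a ∈ F_{p^m} that does not lie in the prime subfield F_p, the number of d ∈ D(α) with Tr(a·d) ≠ 0 equals p^{m-2}(p-1); i.e., the codeword c(a) of C_{D(α)} has Hamming weight p^{m-2}(p-1). -/

import Mathlib

/-- For a surjective linear map between finite modules over a field, every fiber has
cardinality `card M / card V`. -/
lemma fiber_card_mul {K M V : Type*} [Field K] [AddCommGroup M] [Module K M] [Fintype M]
    [DecidableEq M] [AddCommGroup V] [Module K V] [Fintype V] [DecidableEq V]
    (f : M →ₗ[K] V) (hf : Function.Surjective f) (v : V) :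
    (Finset.univ.filter fun x => f x = v).card * Fintype.card V = Fintype.card M := by
  classical
  obtain ⟨x₀, hx₀⟩ := hf v
  have h0 : (Finset.univ.filter fun x => f x = v).card
      = (Finset.univ.filter fun x => f x = 0).card := by
    apply Finset.card_nbij' (fun x => x - x₀) (fun x => x + x₀)
    · intro x hx
      simp only [Finset.mem_coe, Finset.mem_filter, Finset.mem_univ, true_and] at hx ⊢
      simp [map_sub, hx, hx₀]
    · intro x hx
      simp only [Finset.mem_coe, Finset.mem_filter, Finset.mem_univ, true_and] at hx ⊢
      simp [map_add, hx, hx₀]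
    · intro x _; simp
    · intro x _; simp
  have h1 : (Finset.univ.filter fun x => f x = 0).card = Nat.card (LinearMap.ker f) := by
    rw [Nat.card_eq_fintype_card, Fintype.card_subtype]
    congr 1
    ext x
    simp [LinearMap.mem_ker]
  have h2 : Nat.card M = Nat.card (LinearMap.ker f) * Nat.card (M ⧸ LinearMap.ker f) :=
    Submodule.card_eq_card_quotient_mul_card _
  have h3 : Nat.card (M ⧸ LinearMap.ker f) = Nat.card V :=
    Nat.card_congr (f.quotKerEquivOfSurjective hf).toEquiv
  rw [h0, h1, ← Nat.card_eq_fintype_card, ← Nat.card_eq_fintype_card, h2, h3]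

/-- Let `p` be an odd prime, `m ≥ 2`, and `α ∈ F_p` nonzero. For every `a ∈ F_{p^m}` not in
the prime subfield, the codeword `c(a)` of `C_{D(α)}` has Hamming weight `p^(m-2)·(p-1)`. -/
theorem weight_CDalpha_nonprime
    (p : ℕ) [Fact p.Prime] (hp2 : p ≠ 2) (m : ℕ) (hm : 2 ≤ m)
    (F : Type*) [Field F] [Fintype F] [DecidableEq F] [Algebra (ZMod p) F]
    (hcard : Fintype.card F = p ^ m) (α : ZMod p) (hα : α ≠ 0)
    (a : F) (ha : a ∉ Set.range (algebraMap (ZMod p) F)) :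
    (Finset.univ.filter fun d : F =>
        (d ≠ 0 ∧ Algebra.trace (ZMod p) F d = α) ∧
          Algebra.trace (ZMod p) F (a * d) ≠ 0).card = p ^ (m - 2) * (p - 1) := by
  classical
  set T := Algebra.trace (ZMod p) F with hT
  -- nondegeneracy of the trace form
  have hnd : ∀ x : F, (∀ d : F, T (x * d) = 0) → x = 0 := by
    intro x hx
    refine (traceForm_nondegenerate (ZMod p) F).1 x fun d => ?_
    rw [Algebra.traceForm_apply]
    exact hx d
  have hTsurj : Function.Surjective T := Algebra.trace_surjective (ZMod p) F
  -- the linear functional d ↦ T (a * d)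
  let ψ : F →ₗ[ZMod p] ZMod p := T.comp (LinearMap.mulLeft (ZMod p) a)
  have hψ : ∀ d : F, ψ d = T (a * d) := fun d => rfl
  -- the combined map
  let L : F →ₗ[ZMod p] (ZMod p) × (ZMod p) := T.prod ψ
  have hL : ∀ d : F, L d = (T d, T (a * d)) := fun d => rfl
  -- L is surjective
  obtain ⟨u, hu⟩ := hTsurj 1
  have hLsurj : Function.Surjective L := by
    -- find w in ker T with ψ w ≠ 0
    have hex : ∃ w : F, T w = 0 ∧ T (a * w) ≠ 0 := by
      by_contra hcon
      push_neg at hcon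
      -- then ψ = ψ(u) • T, so a is in the prime field
      apply ha
      refine ⟨T (a * u), ?_⟩
      have key : ∀ d : F, T ((algebraMap (ZMod p) F (T (a * u)) - a) * d) = 0 := by
        intro d
        have hker : T (d - T d • u) = 0 := by
          simp [map_sub, map_smul, hu, smul_eq_mul]
        have h1 : T (a * (d - T d • u)) = 0 := hcon _ hker
        have h2 : a * d = a * (d - T d • u) + T d • (a * u) := by
          rw [mul_sub, mul_smul_comm]
          abel
        have h3 : T (a * d) = T d * T (a * u) := by
          rw [h2, map_add, h1, map_smul, smul_eq_mul, zero_add]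
        rw [sub_mul, map_sub, h3]
        have : algebraMap (ZMod p) F (T (a * u)) * d = T (a * u) • d := by
          rw [Algebra.smul_def]
        rw [this, map_smul, smul_eq_mul, mul_comm]
        ring
      have := hnd _ key
      have : algebraMap (ZMod p) F (T (a * u)) = a := by
        rwa [sub_eq_zero] at this
      exact this
    obtain ⟨w, hw0, hwψ⟩ := hex
    intro xy
    obtain ⟨x, y⟩ := xy
    -- e₂ hits (0,1), e₁ hits (1, ψ u); combine
    set t := T (a * w)
    refine ⟨x • u + ((y - x * T (a * u)) * t⁻¹) • w, ?_⟩
    have hti : t * t⁻¹ = 1 := mul_inv_cancel₀ hwψ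
    rw [hL]
    have hTd : T (x • u + ((y - x * T (a * u)) * t⁻¹) • w) = x := by
      simp [map_add, map_smul, hu, hw0, smul_eq_mul]
    have hTa : T (a * (x • u + ((y - x * T (a * u)) * t⁻¹) • w)) = y := by
      rw [mul_add, mul_smul_comm, mul_smul_comm, map_add, map_smul, map_smul,
        smul_eq_mul, smul_eq_mul]
      field_simp
      show x * T (a * u) * T (a * w) + (y - x * T (a * u)) * T (a * w) = y * T (a * w)
      ring
    rw [hTd, hTa]
  -- cardinalities of fibers
  have hp : 0 < p := (Fact.out : p.Prime).pos
  have hcardZ : Fintype.card (ZMod p) = p := ZMod.card p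
  have hA := fiber_card_mul T hTsurj α
  have hB := fiber_card_mul L hLsurj (α, 0)
  rw [hcardZ, hcard] at hA
  have hcardP : Fintype.card ((ZMod p) × (ZMod p)) = p ^ 2 := by
    simp [hcardZ, sq]
  rw [hcardP, hcard] at hB
  -- so card A = p^(m-1), card B = p^(m-2)
  have hAcard : (Finset.univ.filter fun x : F => T x = α).card = p ^ (m - 1) := by
    have h1 : p ^ m = p ^ (m - 1) * p := by
      rw [← pow_succ]
      congr 1
      omega
    rw [h1] at hA
    exact Nat.eq_of_mul_eq_mul_right hp hA
  have hBcard : (Finset.univ.filter fun x : F => L x = (α, 0)).card = p ^ (m - 2) := by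
    have h1 : p ^ m = p ^ (m - 2) * p ^ 2 := by
      rw [← pow_add]
      congr 1
      omega
    rw [h1] at hB
    exact Nat.eq_of_mul_eq_mul_right (by positivity) hB
  -- identify the target set
  have hset : (Finset.univ.filter fun d : F =>
        (d ≠ 0 ∧ T d = α) ∧ T (a * d) ≠ 0)
      = (Finset.univ.filter fun d : F => T d = α).filter fun d => ¬ (T (a * d) = 0) := by
    rw [Finset.filter_filter]
    apply Finset.filter_congr
    intro d _
    constructor
    · rintro ⟨⟨_, h1⟩, h2⟩; exact ⟨h1, h2⟩
    · rintro ⟨h1, h2⟩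
      refine ⟨⟨?_, h1⟩, h2⟩
      rintro rfl
      rw [map_zero] at h1
      exact hα h1.symm
  have hsplit := Finset.card_filter_add_card_filter_not
    (s := Finset.univ.filter fun d : F => T d = α) (p := fun d => T (a * d) = 0)
  have hBeq : ((Finset.univ.filter fun d : F => T d = α).filter fun d => T (a * d) = 0)
      = Finset.univ.filter fun x : F => L x = (α, 0) := by
    rw [Finset.filter_filter]
    apply Finset.filter_congr
    intro d _
    rw [hL, Prod.mk.injEq]
  rw [hset]
  have := hsplit
  rw [hBeq, hBcard, hAcard] at this
  have hge : p ^ (m - 2) ≤ p ^ (m - 1) := Nat.pow_le_pow_right hp (by omega)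
  have hm1 : p ^ (m - 1) = p ^ (m - 2) * p := by
    rw [← pow_succ]; congr 1; omega
  have h1le : 1 ≤ p := hp
  -- conclude by arithmetic
  have : ((Finset.univ.filter fun d : F => T d = α).filter fun d => ¬ (T (a * d) = 0)).card
      = p ^ (m - 1) - p ^ (m - 2) := by omega
  rw [this, hm1]
  have h2 : p ^ (m - 2) * (p - 1) = p ^ (m - 2) * p - p ^ (m - 2) := by
    rw [Nat.mul_sub, mul_one]
  omega
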